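/- If K₁ and K₂ are compact subsets of ℝⁿ with dim_B(K₁) + dim_B(K₂) < n (upper box dimensions), then the arithmetic difference K₁ − K₂ has empty interior, and consequently the set of translations t ∈ ℝⁿ such that K₁ ∩ (K₂ + t) = ∅ is dense in ℝⁿ. -/

import Mathlib

open Pointwise

noncomputable def coverNum {X : Type*} [PseudoMetricSpace X] (S : Set X) (ε : ℝ) : ℕ :=
  sInf {n : ℕ | ∃ t : Finset X, t.card = n ∧ S ⊆ ⋃ x ∈ t, Metric.ball x ε}

noncomputable def ubDim {X : Type*} [PseudoMetricSpace X] (S : Set X) : ℝ :=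
  Filter.limsup (fun ε : ℝ => Real.log (coverNum S ε) / Real.log (1 / ε))
    (nhdsWithin 0 (Set.Ioi 0))

open Metric Filter Set MeasureTheory

private lemma coverNum_le' {X : Type*} [PseudoMetricSpace X] {S : Set X} {ε : ℝ}
    (t : Finset X) (h : S ⊆ ⋃ x ∈ t, Metric.ball x ε) : coverNum S ε ≤ t.card :=
  Nat.sInf_le ⟨t, rfl, h⟩

private lemma coverNum_spec' {X : Type*} [PseudoMetricSpace X] {S : Set X} {ε : ℝ}
    (t : Finset X) (h : S ⊆ ⋃ x ∈ t, Metric.ball x ε) :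
    ∃ u : Finset X, u.card = coverNum S ε ∧ S ⊆ ⋃ x ∈ u, Metric.ball x ε :=
  Nat.sInf_mem (⟨t.card, t, rfl, h⟩ :
    {n : ℕ | ∃ t : Finset X, t.card = n ∧ S ⊆ ⋃ x ∈ t, Metric.ball x ε}.Nonempty)

private lemma isCompact_exists_cover' {X : Type*} [PseudoMetricSpace X] {S : Set X}
    (hS : IsCompact S) {ε : ℝ} (hε : 0 < ε) :
    ∃ t : Finset X, S ⊆ ⋃ x ∈ t, Metric.ball x ε :=
  hS.elim_finite_subcover (fun x : X => Metric.ball x ε) (fun _ => isOpen_ball)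
    (fun x _ => mem_iUnion.2 ⟨x, mem_ball_self hε⟩)

private lemma grid_cover' (n : ℕ) (R ε : ℝ) (hε : 0 < ε) :
    ∃ t : Finset (EuclideanSpace ℝ (Fin n)),
      t.card ≤ (2 * ⌈R * (Real.sqrt n + 1) / ε⌉₊ + 1) ^ n ∧
      Metric.closedBall (0 : EuclideanSpace ℝ (Fin n)) R ⊆ ⋃ x ∈ t, Metric.ball x ε := by
  classical
  have hs : (0:ℝ) < Real.sqrt n + 1 := by positivity
  set ε' : ℝ := ε / (Real.sqrt n + 1) with hε'def
  have hε' : 0 < ε' := by positivity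
  have hkey : R / ε' = R * (Real.sqrt n + 1) / ε := div_div_eq_mul_div R ε _
  set m : ℕ := ⌈R / ε'⌉₊ with hm
  have hmR : R / ε' ≤ m := Nat.le_ceil _
  set c : (Fin n → ℤ) → EuclideanSpace ℝ (Fin n) := fun k => WithLp.toLp 2 (fun i => (k i : ℝ) * ε') with hc
  refine ⟨(Fintype.piFinset fun _ : Fin n => Finset.Icc (-(m:ℤ)) m).image c, ?_, ?_⟩
  · calc ((Fintype.piFinset fun _ : Fin n => Finset.Icc (-(m:ℤ)) m).image c).card
        ≤ (Fintype.piFinset fun _ : Fin n => Finset.Icc (-(m:ℤ)) m).card :=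
          Finset.card_image_le
    _ = (2 * m + 1) ^ n := by
          rw [Fintype.card_piFinset]
          simp only [Int.card_Icc, Finset.prod_const, Finset.card_univ, Fintype.card_fin]
          congr 1
          omega
    _ ≤ (2 * ⌈R * (Real.sqrt n + 1) / ε⌉₊ + 1) ^ n := by
          rw [hm, hkey]
  · intro x hx
    have hxR : ‖x‖ ≤ R := by simpa using hx
    have hcoord : ∀ i, |x i| ≤ R := by
      intro i
      refine le_trans ?_ hxR
      rw [EuclideanSpace.norm_eq, ← Real.sqrt_sq_eq_abs]
      apply Real.sqrt_le_sqrt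
      simp only [Real.norm_eq_abs, sq_abs]
      exact Finset.single_le_sum (f := fun j => x j ^ 2) (fun j _ => sq_nonneg _) (Finset.mem_univ i)
    set k : Fin n → ℤ := fun i => round (x i / ε') with hk
    have hkmem : k ∈ Fintype.piFinset fun _ : Fin n => Finset.Icc (-(m:ℤ)) m := by
      rw [Fintype.mem_piFinset]
      intro i
      rw [Finset.mem_Icc]
      have h1 : |x i / ε'| ≤ (m:ℝ) := by
        rw [abs_div, abs_of_pos hε', div_le_iff₀ hε']
        calc |x i| ≤ R := hcoord i
        _ = (R / ε') * ε' := by field_simp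
        _ ≤ m * ε' := by gcongr
      have h2 : |(k i : ℝ)| ≤ (m:ℝ) + 1/2 := by
        have hr := abs_sub_round (x i / ε')
        calc |(k i : ℝ)| ≤ |x i / ε'| + |(k i : ℝ) - x i / ε'| := by
              have := abs_add_le (x i / ε') ((k i : ℝ) - x i / ε'); simpa using this
        _ ≤ m + 1/2 := by
              rw [abs_sub_comm]
              exact add_le_add h1 hr
      have h3 : |k i| < (m:ℤ) + 1 := by
        have h4 : |(k i:ℝ)| < (m:ℝ) + 1 := lt_of_le_of_lt h2 (by linarith)
        exact_mod_cast h4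
      have := abs_lt.1 h3
      omega
    refine mem_iUnion₂.2 ⟨c k, Finset.mem_image_of_mem c hkmem, ?_⟩
    rw [mem_ball, EuclideanSpace.dist_eq]
    have hterm : ∀ i, dist (x i) (c k i) ^ 2 ≤ (ε'/2)^2 := by
      intro i
      have hd : dist (x i) (c k i) ≤ ε'/2 := by
        rw [Real.dist_eq]
        have he : x i - (k i : ℝ) * ε' = (x i / ε' - k i) * ε' := by field_simp
        rw [hc, WithLp.ofLp_toLp, he, abs_mul, abs_of_pos hε']
        have hr := abs_sub_round (x i / ε')
        calc |x i / ε' - ↑(k i)| * ε' ≤ (1/2) * ε' := by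
              apply mul_le_mul_of_nonneg_right _ hε'.le
              rw [hk]; exact hr
        _ = ε'/2 := by ring
      exact pow_le_pow_left₀ dist_nonneg hd 2
    calc Real.sqrt (∑ i, dist (x i) (c k i) ^ 2)
        ≤ Real.sqrt (∑ _i : Fin n, (ε'/2)^2) := by
          apply Real.sqrt_le_sqrt; exact Finset.sum_le_sum (fun i _ => hterm i)
    _ = Real.sqrt n * (ε'/2) := by
          rw [Finset.sum_const, Finset.card_univ, Fintype.card_fin, nsmul_eq_mul,
            Real.sqrt_mul (by positivity), Real.sqrt_sq (by positivity)]
    _ < ε := by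
          have h5 : Real.sqrt n * (ε'/2) ≤ (Real.sqrt n + 1) * (ε'/2) := by
            nlinarith [Real.sqrt_nonneg (n:ℝ), hε'.le]
          have h6 : (Real.sqrt n + 1) * (ε'/2) = ε / 2 := by
            rw [hε'def]; field_simp
          linarith

private lemma card_lower' {n : ℕ} {S : Set (EuclideanSpace ℝ (Fin n))}
    {c : EuclideanSpace ℝ (Fin n)}
    {r ε : ℝ} (hr : 0 < r) (hε : 0 < ε) (hball : Metric.ball c r ⊆ S)
    (t : Finset (EuclideanSpace ℝ (Fin n))) (h : S ⊆ ⋃ x ∈ t, Metric.ball x ε) :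
    (r / ε) ^ n ≤ (t.card : ℝ) := by
  rcases Nat.eq_zero_or_pos n with hn | hn
  · subst hn
    simp only [pow_zero]
    obtain ⟨x, hx, -⟩ := Set.mem_iUnion₂.1 (h (hball (mem_ball_self hr)))
    exact_mod_cast Finset.card_pos.2 ⟨x, hx⟩
  · haveI : Nontrivial (EuclideanSpace ℝ (Fin n)) := by
      refine ⟨EuclideanSpace.single ⟨0, hn⟩ 1, 0, fun hcon => ?_⟩
      have := congrArg (· ⟨0, hn⟩) hcon
      simp at this
    have hfr : Module.finrank ℝ (EuclideanSpace ℝ (Fin n)) = n := finrank_euclideanSpace_fin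
    have hb : volume (Metric.ball c r) ≤ ∑ x ∈ t, volume (Metric.ball x ε) :=
      le_trans (measure_mono (hball.trans h)) (measure_biUnion_finset_le _ _)
    rw [Measure.addHaar_ball volume c hr.le] at hb
    have hbe : ∀ x : EuclideanSpace ℝ (Fin n), volume (Metric.ball x ε)
        = ENNReal.ofReal (ε ^ n) * volume (Metric.ball (0:EuclideanSpace ℝ (Fin n)) 1) := by
      intro x; rw [Measure.addHaar_ball volume x hε.le, hfr]
    simp only [hbe, Finset.sum_const, hfr] at hb
    have hvpos : volume (Metric.ball (0:EuclideanSpace ℝ (Fin n)) 1) ≠ 0 :=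
      (measure_ball_pos _ _ one_pos).ne'
    have hvlt : volume (Metric.ball (0:EuclideanSpace ℝ (Fin n)) 1) ≠ ⊤ :=
      measure_ball_lt_top.ne
    rw [nsmul_eq_mul, ← mul_assoc, ENNReal.mul_le_mul_iff_left hvpos hvlt] at hb
    have hb2 : ENNReal.ofReal (r ^ n) ≤ ENNReal.ofReal ((t.card : ℝ) * ε ^ n) := by
      rw [ENNReal.ofReal_mul (by positivity), ENNReal.ofReal_natCast]
      exact hb
    have hb3 : r ^ n ≤ (t.card : ℝ) * ε ^ n :=
      (ENNReal.ofReal_le_ofReal_iff (by positivity)).1 hb2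
    rw [div_pow, div_le_iff₀ (by positivity)]
    linarith

private lemma ubDim_bddAbove' {n : ℕ} {K : Set (EuclideanSpace ℝ (Fin n))} (hK : IsCompact K) :
    Filter.IsBoundedUnder (· ≤ ·) (nhdsWithin (0:ℝ) (Set.Ioi 0))
      (fun ε : ℝ => Real.log (coverNum K ε) / Real.log (1 / ε)) := by
  obtain ⟨R, hR⟩ := hK.isBounded.subset_closedBall 0
  set R' : ℝ := max R 1 with hR'
  have hR'1 : (1:ℝ) ≤ R' := le_max_right _ _
  have hKR : K ⊆ closedBall (0 : EuclideanSpace ℝ (Fin n)) R' :=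
    hR.trans (closedBall_subset_closedBall (le_max_left _ _))
  set C : ℝ := 2 * (R' * (Real.sqrt n + 1)) + 3 with hC
  have hC1 : (1:ℝ) ≤ C := by
    have := Real.sqrt_nonneg (n:ℝ)
    nlinarith
  refine ⟨(n : ℝ) * Real.log C / Real.log 2 + n, ?_⟩
  rw [Filter.eventually_map]
  have hmem : Set.Ioo (0:ℝ) (1/2) ∈ nhdsWithin (0:ℝ) (Set.Ioi 0) :=
    Ioo_mem_nhdsGT_of_mem (by norm_num : (0:ℝ) ∈ Set.Ico (0:ℝ) (1/2))
  filter_upwards [hmem] with ε hε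
  obtain ⟨hε0, hε12⟩ := hε
  have hε1 : ε ≤ 1 := by linarith
  obtain ⟨t, htcard, htcov⟩ := grid_cover' n R' ε hε0
  have hcov : coverNum K ε ≤ (2 * ⌈R' * (Real.sqrt n + 1) / ε⌉₊ + 1) ^ n :=
    le_trans (coverNum_le' t (hKR.trans htcov)) htcard
  have hceil : (⌈R' * (Real.sqrt n + 1) / ε⌉₊ : ℝ) ≤ R' * (Real.sqrt n + 1) / ε + 1 :=
    (Nat.ceil_lt_add_one (by positivity)).le
  have hbase : (2 * (⌈R' * (Real.sqrt n + 1) / ε⌉₊:ℝ) + 1) ≤ C / ε := by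
    have h3 : (3:ℝ) ≤ 3 / ε := by
      rw [le_div_iff₀ hε0]; nlinarith
    have h4 : (2 * (R' * (Real.sqrt n + 1)) + 3) / ε
        = 2 * (R' * (Real.sqrt n + 1)) / ε + 3 / ε := by ring
    have h5 : 2 * (R' * (Real.sqrt n + 1) / ε + 1) + 1 ≤ C / ε := by
      rw [hC, h4]
      have h2 : 2 * (R' * (Real.sqrt n + 1) / ε) = 2 * (R' * (Real.sqrt n + 1)) / ε := by ring
      linarith [h3]
    linarith [hceil]
  have hCε1 : (1:ℝ) ≤ C / ε := by
    rw [le_div_iff₀ hε0]; nlinarith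
  have hNle : (coverNum K ε : ℝ) ≤ (C / ε) ^ n := by
    calc (coverNum K ε : ℝ) ≤ ((2 * ⌈R' * (Real.sqrt n + 1) / ε⌉₊ + 1 : ℕ) : ℝ) ^ n := by
          exact_mod_cast hcov
    _ ≤ (C / ε) ^ n := by
          apply pow_le_pow_left₀ (by positivity)
          push_cast
          linarith [hbase]
  have hL : Real.log 2 ≤ Real.log (1/ε) := by
    apply Real.log_le_log (by norm_num)
    rw [le_div_iff₀ hε0]; linarith
  have hL0 : 0 < Real.log (1/ε) := lt_of_lt_of_le (Real.log_pos (by norm_num)) hL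
  have hlogN : Real.log (coverNum K ε) ≤ (n:ℝ) * (Real.log C + Real.log (1/ε)) := by
    rcases Nat.eq_zero_or_pos (coverNum K ε) with h0 | hpos
    · rw [h0]
      simp only [Nat.cast_zero, Real.log_zero]
      have : 0 ≤ Real.log C := Real.log_nonneg hC1
      positivity
    · calc Real.log (coverNum K ε) ≤ Real.log ((C/ε)^n) := by
            apply Real.log_le_log (by exact_mod_cast hpos) hNle
      _ = (n:ℝ) * Real.log (C/ε) := by rw [Real.log_pow]
      _ = (n:ℝ) * (Real.log C + Real.log (1/ε)) := by
            rw [div_eq_mul_inv C ε, Real.log_mul (by positivity) (by positivity), one_div,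
              Real.log_inv]
  rw [div_le_iff₀ hL0]
  have hlog2 : (0:ℝ) < Real.log 2 := Real.log_pos (by norm_num)
  have hlogC : 0 ≤ Real.log C := Real.log_nonneg hC1
  have hcoef : 0 ≤ (n:ℝ) * Real.log C / Real.log 2 := by positivity
  have h10 : (n:ℝ) * Real.log C ≤ ((n:ℝ) * Real.log C / Real.log 2) * Real.log (1/ε) := by
    have hmul := mul_le_mul_of_nonneg_left hL hcoef
    rwa [div_mul_cancel₀ _ hlog2.ne'] at hmul
  calc Real.log (coverNum K ε) ≤ (n:ℝ) * (Real.log C + Real.log (1/ε)) := hlogN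
  _ = (n:ℝ) * Real.log C + (n:ℝ) * Real.log (1/ε) := by ring
  _ ≤ ((n:ℝ) * Real.log C / Real.log 2) * Real.log (1/ε) + (n:ℝ) * Real.log (1/ε) := by
        linarith [h10]
  _ = ((n:ℝ) * Real.log C / Real.log 2 + n) * Real.log (1/ε) := by ring

/-- If `K₁, K₂ ⊆ ℝⁿ` are compact with `dim_B K₁ + dim_B K₂ < n`, then the arithmetic
difference `K₁ - K₂` has empty interior, and the set of translations `t` with
`K₁ ∩ (K₂ + t) = ∅` is dense in `ℝⁿ`. -/
theorem stmt1 (n : ℕ) (K₁ K₂ : Set (EuclideanSpace ℝ (Fin n)))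
    (h₁ : IsCompact K₁) (h₂ : IsCompact K₂)
    (hdim : ubDim K₁ + ubDim K₂ < n) :
    interior (K₁ - K₂) = ∅ ∧
      Dense {t : EuclideanSpace ℝ (Fin n) | K₁ ∩ ((fun y => y + t) '' K₂) = ∅} := by
  classical
  have hint : interior (K₁ - K₂) = ∅ := by
    by_contra hne
    obtain ⟨x, hx⟩ := Set.nonempty_iff_ne_empty.2 hne
    obtain ⟨r, hr0, hball⟩ := Metric.isOpen_iff.1 isOpen_interior x hx
    have hballS : Metric.ball x r ⊆ K₁ - K₂ := hball.trans interior_subset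
    set δ : ℝ := ((n:ℝ) - ubDim K₁ - ubDim K₂) / 4 with hδ
    have hδ0 : 0 < δ := by rw [hδ]; linarith
    set a : ℝ := ubDim K₁ + δ with ha
    set b : ℝ := ubDim K₂ + δ with hb
    set cc : ℝ := (n:ℝ) - (a + b) with hcc
    have hcc0 : 0 < cc := by
      have : cc = 2 * δ := by rw [hcc, ha, hb, hδ]; ring
      rw [this]; linarith
    have hev₁ : ∀ᶠ ε in nhdsWithin (0:ℝ) (Set.Ioi 0),
        Real.log (coverNum K₁ ε) / Real.log (1/ε) < a := by
      apply Filter.eventually_lt_of_limsup_lt _ (ubDim_bddAbove' h₁)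
      show ubDim K₁ < a
      rw [ha]; linarith
    have hev₂ : ∀ᶠ ε in nhdsWithin (0:ℝ) (Set.Ioi 0),
        Real.log (coverNum K₂ ε) / Real.log (1/ε) < b := by
      apply Filter.eventually_lt_of_limsup_lt _ (ubDim_bddAbove' h₂)
      show ubDim K₂ < b
      rw [hb]; linarith
    have hmem : Set.Ioo (0:ℝ) (1/2) ∈ nhdsWithin (0:ℝ) (Set.Ioi 0) :=
      Ioo_mem_nhdsGT_of_mem (by norm_num : (0:ℝ) ∈ Set.Ico (0:ℝ) (1/2))
    have htend : Filter.Tendsto (fun ε : ℝ => ε ^ cc) (nhdsWithin (0:ℝ) (Set.Ioi 0)) (nhds 0) := by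
      have h1 : Filter.Tendsto (fun ε : ℝ => Real.exp (cc * Real.log ε))
          (nhdsWithin (0:ℝ) (Set.Ioi 0)) (nhds 0) := by
        apply Real.tendsto_exp_atBot.comp
        exact (Real.tendsto_log_nhdsGT_zero).const_mul_atBot hcc0
      apply h1.congr'
      filter_upwards [self_mem_nhdsWithin] with ε (hε : ε ∈ Set.Ioi (0:ℝ))
      rw [Real.rpow_def_of_pos hε, mul_comm]
    have hev3 : ∀ᶠ ε in nhdsWithin (0:ℝ) (Set.Ioi 0), ε ^ cc < (r/2)^n :=
      htend.eventually_lt_const (by positivity : (0:ℝ) < (r/2)^n)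
    have hcontra : ∀ᶠ ε in nhdsWithin (0:ℝ) (Set.Ioi 0), False := by
      filter_upwards [hev₁, hev₂, hmem, hev3] with ε hf₁ hf₂ hεI hεc
      obtain ⟨hε0, hε12⟩ := hεI
      have hL0 : 0 < Real.log (1/ε) := by
        apply Real.log_pos
        rw [lt_div_iff₀ hε0]; linarith
      have hinv : (0:ℝ) < ε⁻¹ := by positivity
      have hN₁ : (coverNum K₁ ε : ℝ) < (ε⁻¹) ^ a := by
        rcases Nat.eq_zero_or_pos (coverNum K₁ ε) with h0 | hpos
        · rw [h0]; exact_mod_cast Real.rpow_pos_of_pos hinv a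
        · have hlt : Real.log (coverNum K₁ ε) < a * Real.log (1/ε) := by
            rw [div_lt_iff₀ hL0] at hf₁; exact hf₁
          have h2 : (coverNum K₁ ε : ℝ) = Real.exp (Real.log (coverNum K₁ ε)) := by
            rw [Real.exp_log (by exact_mod_cast hpos)]
          rw [h2, Real.rpow_def_of_pos hinv]
          apply Real.exp_lt_exp.2
          rw [Real.log_inv]
          rw [one_div, Real.log_inv] at hlt
          linarith
      have hN₂ : (coverNum K₂ ε : ℝ) < (ε⁻¹) ^ b := by
        rcases Nat.eq_zero_or_pos (coverNum K₂ ε) with h0 | hpos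
        · rw [h0]; exact_mod_cast Real.rpow_pos_of_pos hinv b
        · have hlt : Real.log (coverNum K₂ ε) < b * Real.log (1/ε) := by
            rw [div_lt_iff₀ hL0] at hf₂; exact hf₂
          have h2 : (coverNum K₂ ε : ℝ) = Real.exp (Real.log (coverNum K₂ ε)) := by
            rw [Real.exp_log (by exact_mod_cast hpos)]
          rw [h2, Real.rpow_def_of_pos hinv]
          apply Real.exp_lt_exp.2
          rw [Real.log_inv]
          rw [one_div, Real.log_inv] at hlt
          linarith
      obtain ⟨t₀, ht₀⟩ := isCompact_exists_cover' h₁ hε0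
      obtain ⟨u₁, hu₁card, hu₁⟩ := coverNum_spec' t₀ ht₀
      obtain ⟨t₀', ht₀'⟩ := isCompact_exists_cover' h₂ hε0
      obtain ⟨u₂, hu₂card, hu₂⟩ := coverNum_spec' t₀' ht₀'
      set w : Finset (EuclideanSpace ℝ (Fin n)) := (u₁ ×ˢ u₂).image (fun p => p.1 - p.2) with hw
      have hwcov : K₁ - K₂ ⊆ ⋃ z ∈ w, Metric.ball z (2*ε) := by
        rintro z hz
        rw [Set.mem_sub] at hz
        obtain ⟨p, hp, q, hq, rfl⟩ := hz
        obtain ⟨p₀, hp₀, hpd⟩ := Set.mem_iUnion₂.1 (hu₁ hp)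
        obtain ⟨q₀, hq₀, hqd⟩ := Set.mem_iUnion₂.1 (hu₂ hq)
        refine Set.mem_iUnion₂.2 ⟨p₀ - q₀, Finset.mem_image.2 ⟨(p₀, q₀),
          Finset.mem_product.2 ⟨hp₀, hq₀⟩, rfl⟩, ?_⟩
        rw [mem_ball] at hpd hqd ⊢
        calc dist (p - q) (p₀ - q₀) ≤ dist p p₀ + dist q q₀ := dist_sub_sub_le _ _ _ _
        _ < 2*ε := by linarith
      have hwcard : (w.card : ℝ) ≤ (coverNum K₁ ε : ℝ) * (coverNum K₂ ε : ℝ) := by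
        rw [← hu₁card, ← hu₂card]
        calc (w.card : ℝ) ≤ ((u₁ ×ˢ u₂).card : ℝ) := by exact_mod_cast Finset.card_image_le
        _ = (u₁.card : ℝ) * u₂.card := by rw [Finset.card_product]; push_cast; ring
      have hlow : (r / (2*ε)) ^ n ≤ (w.card : ℝ) :=
        card_lower' hr0 (by positivity) hballS w hwcov
      have hup : (w.card : ℝ) < (ε⁻¹) ^ (a + b) := by
        calc (w.card : ℝ) ≤ (coverNum K₁ ε : ℝ) * (coverNum K₂ ε : ℝ) := hwcard
        _ < (ε⁻¹) ^ a * (ε⁻¹) ^ b :=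
              mul_lt_mul'' hN₁ hN₂ (by positivity) (by positivity)
        _ = (ε⁻¹) ^ (a + b) := (Real.rpow_add hinv a b).symm
      have hkey : (r/2) ^ n * (ε⁻¹) ^ (n:ℕ) < (ε⁻¹) ^ (a+b) := by
        have hsplit : (r / (2*ε)) ^ n = (r/2)^n * (ε⁻¹)^(n:ℕ) := by
          rw [← mul_pow]
          congr 1
          field_simp
        rw [← hsplit]
        exact lt_of_le_of_lt hlow hup
      have hfinal : (r/2)^n < ε ^ cc := by
        have hεn : (ε⁻¹) ^ (n:ℕ) = (ε⁻¹) ^ ((n:ℝ)) := (Real.rpow_natCast ε⁻¹ n).symm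
        rw [hεn] at hkey
        have h7 : (r/2)^n < (ε⁻¹) ^ (a+b) / (ε⁻¹) ^ ((n:ℝ)) := by
          rw [lt_div_iff₀ (Real.rpow_pos_of_pos hinv _)]
          exact hkey
        have h8 : (ε⁻¹) ^ (a+b) / (ε⁻¹) ^ ((n:ℝ)) = (ε⁻¹) ^ (a + b - n) := by
          rw [← Real.rpow_sub hinv]
        have h9 : (ε⁻¹) ^ (a + b - n) = ε ^ cc := by
          rw [Real.inv_rpow hε0.le, ← Real.rpow_neg hε0.le]
          congr 1
          rw [hcc]; ring
        rw [h8, h9] at h7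
        exact h7
      linarith
    obtain ⟨_, hf⟩ := hcontra.exists
    exact hf
  refine ⟨hint, ?_⟩
  have hset : {t : EuclideanSpace ℝ (Fin n) | K₁ ∩ ((fun y => y + t) '' K₂) = ∅}
      = (K₁ - K₂)ᶜ := by
    ext t
    simp only [Set.mem_setOf_eq, Set.mem_compl_iff, Set.mem_sub]
    constructor
    · rintro h ⟨p, hp, q, hq, rfl⟩
      have hmem : p ∈ K₁ ∩ ((fun y => y + (p - q)) '' K₂) := ⟨hp, q, hq, by module⟩
      rw [h] at hmem
      exact hmem
    · intro h
      rw [Set.eq_empty_iff_forall_notMem]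
      rintro z ⟨hz₁, q, hq, rfl⟩
      exact h ⟨q + t, hz₁, q, hq, by module⟩
  rw [hset]
  exact interior_eq_empty_iff_dense_compl.1 hint
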